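/- (Splitting lemma.) Let I, J ∈ 𝕊 with IJ = −JI, and let φ_I : ℂ → ℍ be the real-algebra embedding determined by φ_I(i) = I. Let Ω ⊂ ℂ be open and let f : Ω → ℍ be continuously real-differentiable. Then ∂_x f(z) + I·∂_y f(z) = 0 for all z = x + iy ∈ Ω if and only if there exist holomorphic functions F, G : Ω → ℂ such that f(z) = φ_I(F(z)) + φ_I(G(z))·J for all z ∈ Ω. -/

import Mathlib

noncomputable section
local notation "ℍ" => Quaternion ℝ

def phiI (I : ℍ) (z : ℂ) : ℍ := ((z.re : ℝ) : ℍ) + ((z.im : ℝ) : ℍ) * I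


lemma unit_re {I : ℍ} (hI : I ^ 2 = -1) : I.re = 0 := by
  have h1 := congrArg QuaternionAlgebra.re hI
  have h2 := congrArg QuaternionAlgebra.imI hI
  have h3 := congrArg QuaternionAlgebra.imJ hI
  have h4 := congrArg QuaternionAlgebra.imK hI
  simp [pow_two, Quaternion.re_mul, Quaternion.imI_mul, Quaternion.imJ_mul, Quaternion.imK_mul, Quaternion.re_one, Quaternion.imI_one, Quaternion.imJ_one, Quaternion.imK_one] at h1 h2 h3 h4
  by_contra h
  have hx : I.imI = 0 := by
    rcases mul_eq_zero.mp (show I.re * I.imI = 0 by linarith) with h'|h' <;> [exact absurd h' h; exact h']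
  have hy : I.imJ = 0 := by
    rcases mul_eq_zero.mp (show I.re * I.imJ = 0 by linarith) with h'|h' <;> [exact absurd h' h; exact h']
  have hz : I.imK = 0 := by
    rcases mul_eq_zero.mp (show I.re * I.imK = 0 by linarith) with h'|h' <;> [exact absurd h' h; exact h']
  rw [hx, hy, hz] at h1
  nlinarith [sq_nonneg I.re]

lemma unit_norm {I : ℍ} (hI : I ^ 2 = -1) :
    I.imI ^ 2 + I.imJ ^ 2 + I.imK ^ 2 = 1 := by
  have h1 := congrArg QuaternionAlgebra.re hI
  have h0 := unit_re hI
  simp [pow_two, Quaternion.re_mul, Quaternion.re_one] at h1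
  rw [h0] at h1
  nlinarith

lemma centralizer {I : ℍ} (hI : I ^ 2 = -1) {q : ℍ} (hq : I * q = q * I) :
    q = ((q.re : ℝ) : ℍ) + (((q * (-I)).re : ℝ) : ℍ) * I := by
  have h0 := unit_re hI
  have hn := unit_norm hI
  have e1 := congrArg QuaternionAlgebra.imI hq
  have e2 := congrArg QuaternionAlgebra.imJ hq
  have e3 := congrArg QuaternionAlgebra.imK hq
  simp [Quaternion.imI_mul, Quaternion.imJ_mul, Quaternion.imK_mul, h0] at e1 e2 e3
  have hs : (q * (-I)).re = q.imI * I.imI + q.imJ * I.imJ + q.imK * I.imK := by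
    simp [Quaternion.re_mul, h0]; ring
  apply Quaternion.ext <;>
    simp [Quaternion.re_mul, Quaternion.imI_mul, Quaternion.imJ_mul, Quaternion.imK_mul, h0, hs]
  · linear_combination (-q.imI) * hn - (I.imJ/2) * e3 + (I.imK/2) * e2
  · linear_combination (-q.imJ) * hn + (I.imI/2) * e3 - (I.imK/2) * e1
  · linear_combination (-q.imK) * hn - (I.imI/2) * e2 + (I.imJ/2) * e1


/-- `A q = (q - IqI)/2`. -/
def Aq (I : ℍ) (q : ℍ) : ℍ := (2:ℝ)⁻¹ • (q - I * q * I)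

/-- `B q = -(q + IqI)J/2`. -/
def Bq (I J : ℍ) (q : ℍ) : ℍ := (2:ℝ)⁻¹ • (-((q + I * q * I) * J))

/-- extraction of complex coordinates from `ℂ_I`. -/
def eps (I : ℍ) (q : ℍ) : ℂ := ⟨q.re, (q * (-I)).re⟩

lemma Aq_add (I p q : ℍ) : Aq I (p + q) = Aq I p + Aq I q := by
  simp only [Aq, mul_add, add_mul, ← smul_add]
  congr 1; abel

lemma Aq_smul (I : ℍ) (r : ℝ) (q : ℍ) : Aq I (r • q) = r • Aq I q := by
  simp only [Aq, mul_smul_comm, smul_mul_assoc, smul_sub, smul_comm r]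

lemma Bq_add (I J p q : ℍ) : Bq I J (p + q) = Bq I J p + Bq I J q := by
  simp only [Bq, mul_add, add_mul, ← smul_add, ← neg_add]
  congr 2; abel

lemma Bq_smul (I J : ℍ) (r : ℝ) (q : ℍ) : Bq I J (r • q) = r • Bq I J q := by
  simp only [Bq, mul_smul_comm, smul_mul_assoc, smul_add, smul_neg, smul_comm r, ← smul_add]

lemma eps_add (I p q : ℍ) : eps I (p + q) = eps I p + eps I q := by
  apply Complex.ext <;>
    simp only [eps, add_mul, Quaternion.re_add, Complex.add_re, Complex.add_im]

lemma eps_smul (I : ℍ) (r : ℝ) (q : ℍ) : eps I (r • q) = r • eps I q := by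
  apply Complex.ext <;>
    simp only [eps, smul_mul_assoc, Quaternion.re_smul, Complex.real_smul, Complex.mul_re,
      Complex.ofReal_re, Complex.ofReal_im, Complex.mul_im, smul_eq_mul] <;> ring

def psiFl (I : ℍ) : ℍ →ₗ[ℝ] ℂ where
  toFun q := eps I (Aq I q)
  map_add' p q := by rw [Aq_add, eps_add]
  map_smul' r q := by rw [Aq_smul, eps_smul]; rfl

def psiGl (I J : ℍ) : ℍ →ₗ[ℝ] ℂ where
  toFun q := eps I (Bq I J q)
  map_add' p q := by rw [Bq_add, eps_add]
  map_smul' r q := by rw [Bq_smul, eps_smul]; rfl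

def psiF (I : ℍ) : ℍ →L[ℝ] ℂ := (psiFl I).toContinuousLinearMap
def psiG (I J : ℍ) : ℍ →L[ℝ] ℂ := (psiGl I J).toContinuousLinearMap

section algebra
variable {I J : ℍ}

lemma mulII (hI : I ^ 2 = -1) : I * I = -1 := by rw [← pow_two]; exact hI

lemma Aq_comm (hI : I ^ 2 = -1) (q : ℍ) : I * Aq I q = Aq I q * I := by
  have h2 := mulII hI
  simp only [Aq, mul_smul_comm, smul_mul_assoc]
  congr 1
  calc I * (q - I * q * I) = I * q - (I * I) * q * I := by noncomm_ring
    _ = I * q + q * I := by rw [h2]; noncomm_ring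
    _ = q * I - I * q * (I * I) := by rw [h2]; noncomm_ring
    _ = (q - I * q * I) * I := by noncomm_ring

lemma Bq_comm (hI : I ^ 2 = -1) (hIJ : I * J = -(J * I)) (q : ℍ) :
    I * Bq I J q = Bq I J q * I := by
  have h2 := mulII hI
  have hJI : J * I = -(I * J) := by rw [hIJ, neg_neg]
  simp only [Bq, mul_smul_comm, smul_mul_assoc]
  congr 1
  calc I * -((q + I * q * I) * J) = -((I * q + (I * I) * q * I) * J) := by noncomm_ring
    _ = -((I * q - q * I) * J) := by rw [h2]; noncomm_ring
    _ = q * (I * J) + I * q * ((-1 : ℍ) * J) := by noncomm_ring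
    _ = q * (I * J) + I * q * ((I * I) * J) := by rw [h2]
    _ = -((q + I * q * I) * (J * I)) := by rw [hJI]; noncomm_ring
    _ = -((q + I * q * I) * J) * I := by noncomm_ring

lemma Aq_mulI (hI : I ^ 2 = -1) (q : ℍ) : Aq I (I * q) = I * Aq I q := by
  have h2 := mulII hI
  simp only [Aq, mul_smul_comm]
  congr 1
  calc I * q - I * (I * q) * I = I * q - (I * I) * q * I := by noncomm_ring
    _ = I * q + q * I := by rw [h2]; noncomm_ring
    _ = I * q - (I * I) * (q * I) := by rw [h2]; noncomm_ring
    _ = I * (q - I * q * I) := by noncomm_ring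

lemma Bq_mulI (hI : I ^ 2 = -1) (q : ℍ) : Bq I J (I * q) = I * Bq I J q := by
  have h2 := mulII hI
  simp only [Bq, mul_smul_comm]
  congr 1
  calc -((I * q + I * (I * q) * I) * J) = -((I * q + ((I * I) * q) * I) * J) := by noncomm_ring
    _ = -((I * q - q * I) * J) := by rw [h2]; noncomm_ring
    _ = -(I * (q * J)) - (-1 : ℍ) * (q * (I * J)) := by noncomm_ring
    _ = -(I * (q * J)) - (I * I) * (q * (I * J)) := by rw [h2]
    _ = I * -((q + I * q * I) * J) := by noncomm_ring

lemma ABJ (hJ : J ^ 2 = -1) (q : ℍ) : Aq I q + Bq I J q * J = q := by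
  have h2 := mulII hJ
  simp only [Aq, Bq, smul_mul_assoc, ← smul_add]
  have h3 : (q - I * q * I) + (-((q + I * q * I) * J)) * J = q + q := by
    calc (q - I * q * I) + (-((q + I * q * I) * J)) * J
        = (q - I * q * I) - (q + I * q * I) * (J * J) := by noncomm_ring
      _ = q + q := by rw [h2]; noncomm_ring
  rw [h3, ← two_smul ℝ q, smul_smul]
  norm_num

lemma phi_eps (hI : I ^ 2 = -1) {q : ℍ} (hq : I * q = q * I) : phiI I (eps I q) = q :=
  (centralizer hI hq).symm

lemma phi_mul_I (hI : I ^ 2 = -1) (c : ℂ) : phiI I (Complex.I * c) = I * phiI I c := by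
  have h2 := mulII hI
  simp only [phiI, Complex.mul_re, Complex.mul_im, Complex.I_re, Complex.I_im]
  have h3 : I * ((c.im : ℝ) * I : ℍ) = ((c.im : ℝ) : ℍ) * (I * I) := by
    rw [← mul_assoc, ← Quaternion.coe_commutes, mul_assoc]
  rw [mul_add, h3, h2, ← Quaternion.coe_commutes (c.re) I]
  push_cast
  noncomm_ring

lemma eps_phi (hI : I ^ 2 = -1) (w : ℂ) : eps I (phiI I w) = w := by
  have h0 := unit_re hI
  have hn := unit_norm hI
  apply Complex.ext <;>
    simp [eps, phiI, Quaternion.re_mul, h0]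
  linear_combination w.im * hn

end algebra

section linmaps
variable (I J : ℍ)

lemma phiI_repr (w : ℂ) : phiI I w = w.re • (1 : ℍ) + w.im • I := by
  simp only [phiI, Quaternion.coe_mul_eq_smul]
  congr 1
  rw [← Quaternion.coe_mul_eq_smul, mul_one]

def phiIl : ℂ →ₗ[ℝ] ℍ where
  toFun w := w.re • (1 : ℍ) + w.im • I
  map_add' u v := by simp [add_smul]; abel
  map_smul' r u := by simp [smul_smul, smul_add, Complex.smul_re, Complex.smul_im]

def phiIJl : ℂ →ₗ[ℝ] ℍ where
  toFun w := w.re • J + w.im • (I * J)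
  map_add' u v := by simp [add_smul]; abel
  map_smul' r u := by simp [smul_smul, smul_add, Complex.smul_re, Complex.smul_im]

def phiIL : ℂ →L[ℝ] ℍ := (phiIl I).toContinuousLinearMap
def phiIJL : ℂ →L[ℝ] ℍ := (phiIJl I J).toContinuousLinearMap

lemma phiIL_apply (w : ℂ) : phiIL I w = phiI I w := (phiI_repr I w).symm

lemma phiIJL_apply (w : ℂ) : phiIJL I J w = phiI I w * J := by
  rw [phiI_repr]
  show w.re • J + w.im • (I * J) = _
  rw [add_mul, smul_mul_assoc, smul_mul_assoc, one_mul]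

lemma psiF_apply (q : ℍ) : psiF I q = eps I (Aq I q) := rfl
lemma psiG_apply (q : ℍ) : psiG I J q = eps I (Bq I J q) := rfl

end linmaps

section inter
variable {I J : ℍ}

lemma psiF_I (hI : I ^ 2 = -1) (q : ℍ) : psiF I (I * q) = Complex.I * psiF I q := by
  rw [psiF_apply, psiF_apply, Aq_mulI hI]
  conv_lhs => rw [← phi_eps hI (Aq_comm hI q), ← phi_mul_I hI, eps_phi hI]

lemma psiG_I (hI : I ^ 2 = -1) (hIJ : I * J = -(J * I)) (q : ℍ) :
    psiG I J (I * q) = Complex.I * psiG I J q := by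
  rw [psiG_apply, psiG_apply, Bq_mulI hI]
  conv_lhs => rw [← phi_eps hI (Bq_comm hI hIJ q), ← phi_mul_I hI, eps_phi hI]

lemma split_q (hI : I ^ 2 = -1) (hJ : J ^ 2 = -1) (hIJ : I * J = -(J * I)) (q : ℍ) :
    q = phiI I (psiF I q) + phiI I (psiG I J q) * J := by
  rw [psiF_apply, psiG_apply, phi_eps hI (Aq_comm hI q), phi_eps hI (Bq_comm hI hIJ q),
    ABJ hJ]

end inter

/-- real differentiability plus Cauchy–Riemann gives complex differentiability. -/
lemma cr_diff {Ω : Set ℂ} (hΩ : IsOpen Ω) {g : ℂ → ℂ} {z : ℂ} (hz : z ∈ Ω)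
    (hd : DifferentiableWithinAt ℝ g Ω z)
    (hcr : fderivWithin ℝ g Ω z Complex.I = Complex.I * fderivWithin ℝ g Ω z 1) :
    DifferentiableWithinAt ℂ g Ω z := by
  rw [differentiableWithinAt_iff_restrictScalars ℝ hd (hΩ.uniqueDiffWithinAt hz)]
  refine ⟨(ContinuousLinearMap.id ℂ ℂ).smulRight (fderivWithin ℝ g Ω z 1), ?_⟩
  apply ContinuousLinearMap.ext
  intro w
  have key : ∀ L : ℂ →L[ℝ] ℂ, L w = w.re • L 1 + w.im • L Complex.I := by
    intro L
    conv_lhs => rw [← Complex.re_add_im w,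
      show (↑w.re + ↑w.im * Complex.I : ℂ) = w.re • (1 : ℂ) + w.im • Complex.I by
        simp [Complex.real_smul]]
    rw [map_add, map_smul, map_smul]
  rw [key, key]
  simp only [ContinuousLinearMap.coe_restrictScalars', ContinuousLinearMap.smulRight_apply,
    ContinuousLinearMap.coe_id', id_eq, one_smul, hcr]
  norm_num

/-- the splitting lemma: a continuously real-differentiable
`f : Ω → ℍ` satisfies `(∂_x + I ∂_y) f = 0` on `Ω` iff `f = φ_I ∘ F + (φ_I ∘ G)·J`
for holomorphic `F, G : Ω → ℂ`, where `I, J` are anticommuting imaginary units. -/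
theorem splitting_lemma (I J : ℍ) (hI : I ^ 2 = -1) (hJ : J ^ 2 = -1)
    (hIJ : I * J = -(J * I)) (Ω : Set ℂ) (hΩ : IsOpen Ω)
    (f : ℂ → ℍ) (hf : ContDiffOn ℝ 1 f Ω) :
    (∀ z ∈ Ω, fderivWithin ℝ f Ω z 1 + I * fderivWithin ℝ f Ω z Complex.I = 0) ↔
    (∃ F G : ℂ → ℂ, DifferentiableOn ℂ F Ω ∧ DifferentiableOn ℂ G Ω ∧
      ∀ z ∈ Ω, f z = phiI I (F z) + phiI I (G z) * J) := by
  have h2 := mulII hI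
  constructor
  · intro hCR
    refine ⟨fun w => psiF I (f w), fun w => psiG I J (f w), ?_, ?_,
      fun z _ => split_q hI hJ hIJ (f z)⟩
    · intro z hz
      have hud := hΩ.uniqueDiffWithinAt (𝕜 := ℝ) hz
      have hfd : DifferentiableWithinAt ℝ f Ω z := (hf.differentiableOn one_ne_zero) z hz
      have hDf : HasFDerivWithinAt f (fderivWithin ℝ f Ω z) Ω z := hfd.hasFDerivWithinAt
      set D := fderivWithin ℝ f Ω z with hD
      have hDi : D Complex.I = I * D 1 := by
        have h := hCR z hz
        have h3 := congrArg (fun x => I * x) h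
        simp only [mul_add, ← mul_assoc, h2, neg_mul, one_mul, neg_one_mul, mul_zero] at h3
        rw [add_neg_eq_zero] at h3
        exact h3.symm
      have hFd : HasFDerivWithinAt (fun w => psiF I (f w)) ((psiF I).comp D) Ω z :=
        (psiF I).hasFDerivAt.comp_hasFDerivWithinAt z hDf
      refine cr_diff hΩ hz hFd.differentiableWithinAt ?_
      rw [hFd.fderivWithin hud]
      simp only [ContinuousLinearMap.coe_comp', Function.comp_apply]
      rw [hDi, psiF_I hI]
    · intro z hz
      have hud := hΩ.uniqueDiffWithinAt (𝕜 := ℝ) hz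
      have hfd : DifferentiableWithinAt ℝ f Ω z := (hf.differentiableOn one_ne_zero) z hz
      have hDf : HasFDerivWithinAt f (fderivWithin ℝ f Ω z) Ω z := hfd.hasFDerivWithinAt
      set D := fderivWithin ℝ f Ω z with hD
      have hDi : D Complex.I = I * D 1 := by
        have h := hCR z hz
        have h3 := congrArg (fun x => I * x) h
        simp only [mul_add, ← mul_assoc, h2, neg_mul, one_mul, neg_one_mul, mul_zero] at h3
        rw [add_neg_eq_zero] at h3
        exact h3.symm
      have hGd : HasFDerivWithinAt (fun w => psiG I J (f w)) ((psiG I J).comp D) Ω z :=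
        (psiG I J).hasFDerivAt.comp_hasFDerivWithinAt z hDf
      refine cr_diff hΩ hz hGd.differentiableWithinAt ?_
      rw [hGd.fderivWithin hud]
      simp only [ContinuousLinearMap.coe_comp', Function.comp_apply]
      rw [hDi, psiG_I hI hIJ]
  · rintro ⟨F, G, hF, hG, hfeq⟩ z hz
    have hud := hΩ.uniqueDiffWithinAt (𝕜 := ℝ) hz
    set DF := fderivWithin ℂ F Ω z with hDF
    set DG := fderivWithin ℂ G Ω z with hDG
    have hFr : HasFDerivWithinAt F (DF.restrictScalars ℝ) Ω z :=
      ((hF z hz).hasFDerivWithinAt).restrictScalars ℝ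
    have hGr : HasFDerivWithinAt G (DG.restrictScalars ℝ) Ω z :=
      ((hG z hz).hasFDerivWithinAt).restrictScalars ℝ
    have hg : HasFDerivWithinAt (fun w => phiI I (F w) + phiI I (G w) * J)
        ((phiIL I).comp (DF.restrictScalars ℝ) + (phiIJL I J).comp (DG.restrictScalars ℝ))
        Ω z := by
      have h1 : HasFDerivWithinAt (fun w => phiIL I (F w) + phiIJL I J (G w))
          ((phiIL I).comp (DF.restrictScalars ℝ) + (phiIJL I J).comp (DG.restrictScalars ℝ))
          Ω z :=
        ((phiIL I).hasFDerivAt.comp_hasFDerivWithinAt z hFr).add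
          ((phiIJL I J).hasFDerivAt.comp_hasFDerivWithinAt z hGr)
      exact h1.congr (fun w _ => by simp only [phiIL_apply, phiIJL_apply])
        (by rw [phiIL_apply, phiIJL_apply])
    have hfg : fderivWithin ℝ f Ω z =
        (phiIL I).comp (DF.restrictScalars ℝ) + (phiIJL I J).comp (DG.restrictScalars ℝ) := by
      rw [fderivWithin_congr hfeq (hfeq z hz)]
      exact hg.fderivWithin hud
    have hDFi : DF Complex.I = Complex.I * DF 1 := by
      conv_lhs => rw [show (Complex.I : ℂ) = Complex.I • (1 : ℂ) by simp, map_smul,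
        smul_eq_mul]
    have hDGi : DG Complex.I = Complex.I * DG 1 := by
      conv_lhs => rw [show (Complex.I : ℂ) = Complex.I • (1 : ℂ) by simp, map_smul,
        smul_eq_mul]
    rw [hfg]
    simp only [ContinuousLinearMap.add_apply, ContinuousLinearMap.coe_comp',
      Function.comp_apply, ContinuousLinearMap.coe_restrictScalars', phiIL_apply,
      phiIJL_apply, hDFi, hDGi, phi_mul_I hI]
    set X := phiI I (DF 1)
    set Y := phiI I (DG 1)
    calc X + Y * J + I * (I * X + I * Y * J)
        = X + Y * J + (I * I) * X + ((I * I) * Y) * J := by noncomm_ring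
      _ = 0 := by rw [h2]; noncomm_ring
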